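/- arXiv:2104.03532 — 3 statements merged into one kernel-verified Lean document; each statement's English description precedes it below -/
import Mathlib

section
/- (Invariance of the VIO dynamics, Proposition 1, part 1.) Let S = (R_S, x_S) ∈ SE_{e₃}(3) be fixed. If a differentiable trajectory t ↦ (R_P(t), x_P(t), v(t), p₁(t), …, pₙ(t)) solves the VIO dynamics for inputs Ω(t), a(t), then the transformed trajectory t ↦ (R_Sᵀ R_P(t), R_Sᵀ(x_P(t) − x_S), v(t), R_Sᵀ(p₁(t) − x_S), …, R_Sᵀ(pₙ(t) − x_S)) also solves the VIO dynamics for the same inputs Ω(t), a(t). -/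
open scoped InnerProductSpace Matrix

noncomputable section

/-- Vectors in ℝ³ with the Euclidean norm. -/
abbrev V3 := EuclideanSpace ℝ (Fin 3)

abbrev Mat3 := Matrix (Fin 3) (Fin 3) ℝ

/-- `R ∈ SO(3)` iff `RᵀR = I` and `det R = 1`. -/
def SO3 (R : Mat3) : Prop := R.transpose * R = 1 ∧ R.det = 1

/-- Matrix-vector multiplication. -/
def mv (M : Mat3) (q : V3) : V3 := WithLp.toLp 2 (M.mulVec q)

/-- The standard gravity direction `e₃ = (0,0,1)`. -/
def e3 : V3 := WithLp.toLp 2 ![0, 0, 1]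

/-- Elements of SE(3) are pairs `(R, x)`. -/
abbrev SE3 := Mat3 × V3

/-- SE(3) group product: `(R₁,x₁)·(R₂,x₂) = (R₁R₂, x₁ + R₁x₂)`. -/
def seMul (P Q : SE3) : SE3 := (P.1 * Q.1, P.2 + mv P.1 Q.2)

/-- SE(3) identity `(I, 0)`. -/
def seId : SE3 := (1, 0)

/-- SE(3) inverse: `P⁻¹ = (Rᵀ, −Rᵀx)`. -/
def seInv (P : SE3) : SE3 := (P.1ᵀ, -(mv P.1ᵀ P.2))

/-- Action of SE(3) on ℝ³: `P(q) = R_P q + x_P`. -/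
def seAct (P : SE3) (q : V3) : V3 := mv P.1 q + P.2

/-- The subgroup `SE_{e₃}(3) = {(R,x) ∈ SE(3) : R e₃ = e₃}`. -/
def SEe3 : Set SE3 := {S | SO3 S.1 ∧ mv S.1 e3 = e3}

/-- The skew-symmetric matrix `Ω^×` with `Ω^× y = Ω × y`. -/
def skew (Ω : V3) : Mat3 := !![0, -Ω 2, Ω 1; Ω 2, 0, -Ω 0; -Ω 1, Ω 0, 0]

/-- The cross product on ℝ³. -/
def cross3 (a b : V3) : V3 := WithLp.toLp 2 (crossProduct a b)

attribute [local instance] Matrix.normedAddCommGroup Matrix.normedSpace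

/-- (Proposition 1, part 1.) If a differentiable trajectory
`t ↦ (R_P(t), x_P(t), v(t), pᵢ(t))` solves the VIO dynamics for inputs `Ω(t), a(t)`,
then for any fixed `S = (R_S, x_S) ∈ SE_{e₃}(3)` the transformed trajectory
`t ↦ (R_Sᵀ R_P(t), R_Sᵀ(x_P(t) − x_S), v(t), R_Sᵀ(pᵢ(t) − x_S))` also solves the VIO
dynamics for the same inputs. -/
theorem vio_dynamics_invariant (n : ℕ) (g : ℝ) (Ω a : ℝ → V3)
    (S : SE3) (hS : S ∈ SEe3)
    (R : ℝ → Mat3) (x v : ℝ → V3) (p : Fin n → ℝ → V3)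
    (hSO : ∀ t, SO3 (R t))
    (hR : ∀ t, HasDerivAt R (R t * skew (Ω t)) t)
    (hx : ∀ t, HasDerivAt x (mv (R t) (v t)) t)
    (hv : ∀ t, HasDerivAt v (-cross3 (Ω t) (v t) + a t - g • mv (R t)ᵀ e3) t)
    (hp : ∀ i, ∀ t, HasDerivAt (p i) 0 t) :
    (∀ t, SO3 (S.1ᵀ * R t)) ∧
    (∀ t, HasDerivAt (fun s => S.1ᵀ * R s) ((S.1ᵀ * R t) * skew (Ω t)) t) ∧
    (∀ t, HasDerivAt (fun s => mv S.1ᵀ (x s - S.2)) (mv (S.1ᵀ * R t) (v t)) t) ∧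
    (∀ t, HasDerivAt v (-cross3 (Ω t) (v t) + a t - g • mv (S.1ᵀ * R t)ᵀ e3) t) ∧
    (∀ i, ∀ t, HasDerivAt (fun s => mv S.1ᵀ (p i s - S.2)) 0 t) := by
  obtain ⟨⟨hSorth, hSdet⟩, hSe3⟩ := hS
  have hSST : S.1 * S.1ᵀ = 1 := mul_eq_one_comm.mp hSorth
  -- continuous linear map of left multiplication by S.1ᵀ on vectors
  let L : V3 →L[ℝ] V3 :=
    LinearMap.toContinuousLinearMap ((LinearMap.mk (AddHom.mk (fun q => mv S.1ᵀ q) (fun a b => by simp [mv, Matrix.mulVec_add]))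
        (fun c a => by simp [mv, Matrix.mulVec_smul])) : V3 →ₗ[ℝ] V3)
  have hL : ∀ q : V3, L q = mv S.1ᵀ q := fun q => rfl
  -- continuous linear map of left multiplication by S.1ᵀ on matrices
  let M : Mat3 →L[ℝ] Mat3 :=
    LinearMap.toContinuousLinearMap (LinearMap.mulLeft ℝ S.1ᵀ)
  have hM : ∀ A : Mat3, M A = S.1ᵀ * A := fun A => rfl
  refine ⟨?_, ?_, ?_, ?_, ?_⟩
  · intro t
    obtain ⟨hRo, hRd⟩ := hSO t
    constructor
    · calc (S.1ᵀ * R t)ᵀ * (S.1ᵀ * R t) = (R t)ᵀ * (S.1 * S.1ᵀ) * R t := by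
            simp [Matrix.transpose_mul, Matrix.mul_assoc]
      _ = 1 := by rw [hSST]; simpa [Matrix.mul_assoc] using hRo
    · simp [Matrix.det_mul, Matrix.det_transpose, hSdet, hRd]
  · intro t
    have := (M.hasFDerivAt.comp_hasDerivAt t (hR t))
    have e : S.1ᵀ * R t * skew (Ω t) = M (R t * skew (Ω t)) := by rw [Matrix.mul_assoc]; rfl
    rw [e]; exact this
  · intro t
    have h1 : HasDerivAt (fun s => x s - S.2) (mv (R t) (v t)) t := (hx t).sub_const S.2
    have := (L.hasFDerivAt.comp_hasDerivAt t h1)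
    have e : mv (S.1ᵀ * R t) (v t) = L (mv (R t) (v t)) := by simp [hL, mv, Matrix.mulVec_mulVec]
    rw [e]; exact this
  · intro t
    have hkey : mv (S.1ᵀ * R t)ᵀ e3 = mv (R t)ᵀ e3 := by
      have : (S.1ᵀ * R t)ᵀ = (R t)ᵀ * S.1 := by simp [Matrix.transpose_mul]
      rw [this]
      show WithLp.toLp 2 (((R t)ᵀ * S.1).mulVec e3.ofLp) = mv (R t)ᵀ e3
      rw [← Matrix.mulVec_mulVec]
      exact congrArg (mv (R t)ᵀ) hSe3
    rw [hkey]; exact hv t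
  · intro i t
    have h1 : HasDerivAt (fun s => p i s - S.2) 0 t := by
      simpa using (hp i t).sub_const S.2
    have := (L.hasFDerivAt.comp_hasDerivAt t h1)
    rw [L.map_zero] at this; exact this
end
end

section
/- (Lemma 1, action property.) The map Φ is a right group action of the VI-SLAM group G on SE(3) × ℝ³ × (ℝ³)ⁿ: Φ of the group identity fixes every state, and Φ((A¹,w¹,Q¹ᵢ)·(A²,w²,Q²ᵢ), (P,v,pᵢ)) = Φ((A²,w²,Q²ᵢ), Φ((A¹,w¹,Q¹ᵢ), (P,v,pᵢ))) for all group elements and all states. -/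
open scoped InnerProductSpace Matrix

noncomputable section

/-- Elements of SOT(3) are pairs `(R_Q, c_Q)`. -/
abbrev SOT3 := Mat3 × ℝ

/-- SOT(3) product `(R₁,c₁)·(R₂,c₂) = (R₁R₂, c₁c₂)`. -/
def sotMul (Q1 Q2 : SOT3) : SOT3 := (Q1.1 * Q2.1, Q1.2 * Q2.2)

/-- SOT(3) inverse `(R_Qᵀ, c_Q⁻¹)`. -/
def sotInv (Q : SOT3) : SOT3 := (Q.1ᵀ, Q.2⁻¹)

/-- Action of SOT(3) on ℝ³: `Q(q) = c_Q R_Q q`. -/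
def sotAct (Q : SOT3) (q : V3) : V3 := Q.2 • mv Q.1 q

/-- Elements of the VI-SLAM group `G = SE₂(3) × SOT(3)ⁿ`. -/
abbrev GVI (n : ℕ) := SE3 × V3 × (Fin n → SOT3)

/-- VI-SLAM group product. -/
def gMul {n : ℕ} (X Y : GVI n) : GVI n :=
  (seMul X.1 Y.1, X.2.1 + mv X.1.1 Y.2.1, fun i => sotMul (X.2.2 i) (Y.2.2 i))

/-- VI-SLAM group identity `(I₄, 0, (I,1)ᵢ)`. -/
def gId {n : ℕ} : GVI n := (seId, 0, fun _ => (1, 1))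

/-- VI-SLAM group inverse `(A⁻¹, −R_Aᵀw, Qᵢ⁻¹)`. -/
def gInv {n : ℕ} (X : GVI n) : GVI n :=
  (seInv X.1, -(mv X.1.1ᵀ X.2.1), fun i => sotInv (X.2.2 i))

/-- Membership in the VI-SLAM group: rotation parts in SO(3), scale parts positive. -/
def gMem {n : ℕ} (X : GVI n) : Prop :=
  SO3 X.1.1 ∧ ∀ i, SO3 (X.2.2 i).1 ∧ 0 < (X.2.2 i).2

/-- The action `Φ((A, w, Qᵢ), (P, v, pᵢ)) = (PA, R_Aᵀ(v − w), (P A T_C)(Qᵢ⁻¹((P T_C)⁻¹(pᵢ))))`. -/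
def Phi {n : ℕ} (TC : SE3) (X : GVI n) (ξ : SE3 × V3 × (Fin n → V3)) :
    SE3 × V3 × (Fin n → V3) :=
  (seMul ξ.1 X.1, mv X.1.1ᵀ (ξ.2.1 - X.2.1),
    fun i => seAct (seMul (seMul ξ.1 X.1) TC)
      (sotAct (sotInv (X.2.2 i)) (seAct (seInv (seMul ξ.1 TC)) (ξ.2.2 i))))

-- Auxiliary lemmas ------------------------------------------------------

lemma mv_mul (A B : Mat3) (q : V3) : mv (A * B) q = mv A (mv B q) := by
  simp [mv, Matrix.mulVec_mulVec]

lemma mv_one (q : V3) : mv 1 q = q := by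
  show WithLp.toLp 2 ((1 : Mat3).mulVec q) = q
  simp

lemma mv_sub (A : Mat3) (q r : V3) : mv A (q - r) = mv A q - mv A r := by
  show WithLp.toLp 2 (A.mulVec (q - r)) = WithLp.toLp 2 (A.mulVec q) - WithLp.toLp 2 (A.mulVec r)
  ext i; simp [Matrix.mulVec_sub]

lemma mv_add (A : Mat3) (q r : V3) : mv A (q + r) = mv A q + mv A r := by
  show WithLp.toLp 2 (A.mulVec (q + r)) = WithLp.toLp 2 (A.mulVec q) + WithLp.toLp 2 (A.mulVec r)
  ext i; simp [Matrix.mulVec_add]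

lemma mv_smul (A : Mat3) (c : ℝ) (q : V3) : mv A (c • q) = c • mv A q := by
  show WithLp.toLp 2 (A.mulVec (c • q)) = c • WithLp.toLp 2 (A.mulVec q)
  ext i; simp [Matrix.mulVec_smul]

lemma mv_neg (A : Mat3) (q : V3) : mv A (-q) = -mv A q := by
  show WithLp.toLp 2 (A.mulVec (-q)) = -WithLp.toLp 2 (A.mulVec q)
  ext i; simp [Matrix.mulVec_neg]

lemma mv_zero (A : Mat3) : mv A 0 = 0 := by
  show WithLp.toLp 2 (A.mulVec 0) = 0
  simp

lemma SO3.mul_transpose {R : Mat3} (h : SO3 R) : R * Rᵀ = 1 := by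
  have := h.1
  rw [mul_eq_one_comm] at this
  exact this

lemma SO3.transpose_mul {R : Mat3} (h : SO3 R) : Rᵀ * R = 1 := h.1

lemma SO3.mul {R S : Mat3} (hR : SO3 R) (hS : SO3 S) : SO3 (R * S) := by
  refine ⟨?_, ?_⟩
  · rw [Matrix.transpose_mul, Matrix.mul_assoc, ← Matrix.mul_assoc Rᵀ, hR.1,
      Matrix.one_mul, hS.1]
  · rw [Matrix.det_mul, hR.2, hS.2, one_mul]

lemma seMul_assoc (P Q R : SE3) : seMul (seMul P Q) R = seMul P (seMul Q R) := by
  simp [seMul, Matrix.mul_assoc, mv_mul, mv_add, add_assoc]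

lemma seAct_seMul (P Q : SE3) (q : V3) : seAct (seMul P Q) q = seAct P (seAct Q q) := by
  simp only [seAct, seMul, mv_mul, mv_add]
  abel

lemma seAct_seInv (S : SE3) (q : V3) : seAct (seInv S) q = mv S.1ᵀ (q - S.2) := by
  simp [seAct, seInv, sub_eq_add_neg, mv_add, mv_neg]

lemma seAct_seAct_seInv (S : SE3) (h : S.1 * S.1ᵀ = 1) (q : V3) :
    seAct S (seAct (seInv S) q) = q := by
  rw [seAct_seInv, seAct]
  rw [← mv_mul, h, mv_one, sub_add_cancel]

lemma seAct_seInv_seAct (S : SE3) (h : S.1ᵀ * S.1 = 1) (q : V3) :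
    seAct (seInv S) (seAct S q) = q := by
  rw [seAct_seInv, seAct]
  rw [add_sub_cancel_right, ← mv_mul, h, mv_one]

lemma sotAct_sotInv_mul (X Y : SOT3) (q : V3) :
    sotAct (sotInv (sotMul X Y)) q = sotAct (sotInv Y) (sotAct (sotInv X) q) := by
  simp only [sotAct, sotInv, sotMul, Matrix.transpose_mul, mv_mul, mv_smul,
    mul_inv, smul_smul]
  ring_nf

/-- (Lemma 1, action property.) `Φ` is a right group action of the
VI-SLAM group on `SE(3) × ℝ³ × (ℝ³)ⁿ`. -/
theorem Phi_is_right_action (n : ℕ) (hn : 1 ≤ n) (TC : SE3) (hTC : SO3 TC.1) :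
    (∀ ξ : SE3 × V3 × (Fin n → V3), SO3 ξ.1.1 → Phi TC gId ξ = ξ) ∧
    (∀ X Y : GVI n, gMem X → gMem Y →
      ∀ ξ : SE3 × V3 × (Fin n → V3), SO3 ξ.1.1 →
        Phi TC (gMul X Y) ξ = Phi TC Y (Phi TC X ξ)) := by
  have sot_id : ∀ z : V3, sotAct (sotInv ((1 : Mat3), (1 : ℝ))) z = z := by
    intro z; simp [sotAct, sotInv, mv_one]
  constructor
  · rintro ⟨P, v, p⟩ hξ
    have h1 : seMul P seId = P := by simp [seMul, seId, mv_zero]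
    refine Prod.ext ?_ (Prod.ext ?_ ?_)
    · simpa [Phi, gId] using h1
    · simp [Phi, gId, seId, Matrix.transpose_one, mv_one]
    · funext i
      simp only [Phi, gId, h1, sot_id]
      exact seAct_seAct_seInv (seMul P TC) (SO3.mul_transpose (hξ.mul hTC)) _
  · rintro ⟨A1, w1, Q1⟩ ⟨A2, w2, Q2⟩ hX hY ⟨P, v, p⟩ hξ
    refine Prod.ext ?_ (Prod.ext ?_ ?_)
    · simp [Phi, gMul, seMul_assoc]
    · show mv (seMul A1 A2).1ᵀ (v - (w1 + mv A1.1 w2))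
        = mv A2.1ᵀ (mv A1.1ᵀ (v - w1) - w2)
      have hA1 : SO3 A1.1 := hX.1
      have h : (seMul A1 A2).1 = A1.1 * A2.1 := rfl
      rw [h, Matrix.transpose_mul, mv_mul]
      congr 1
      simp only [mv_sub, mv_add, ← mv_mul, hA1.transpose_mul, mv_one]
      abel
    · funext i
      show seAct (seMul (seMul P (seMul A1 A2)) TC)
          (sotAct (sotInv (sotMul (Q1 i) (Q2 i))) (seAct (seInv (seMul P TC)) (p i)))
        = seAct (seMul (seMul (seMul P A1) A2) TC)
          (sotAct (sotInv (Q2 i))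
            (seAct (seInv (seMul (seMul P A1) TC))
              (seAct (seMul (seMul P A1) TC)
                (sotAct (sotInv (Q1 i)) (seAct (seInv (seMul P TC)) (p i))))))
      rw [seAct_seInv_seAct _ (SO3.transpose_mul ((hξ.mul hX.1).mul hTC)),
        sotAct_sotInv_mul, seMul_assoc P A1 A2]
end
end

section
/- (Lemma 2, part 2: output equivariance.) For every group element (A, w, Q₁, …, Qₙ) ∈ G, every state (P, v, pᵢ) with (P T_C)⁻¹(p_k) ≠ 0 for all k, and every index k, one has π_{S²}( ((PA) T_C)⁻¹ ( (P A T_C)( Q_k⁻¹( (P T_C)⁻¹(p_k) ) ) ) ) = R_{Q_k}ᵀ π_{S²}( (P T_C)⁻¹(p_k) ); that is, the measurement function h is equivariant with respect to the actions Φ and ρ: h(Φ(X, ξ)) = ρ(X, h(ξ)). -/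
open scoped InnerProductSpace Matrix

noncomputable section

/-- Sphere projection `π_{S²}(q) = q/‖q‖`. -/
def piS (q : V3) : V3 := ‖q‖⁻¹ • q

/-- The measurement function `h^k(P, v, pᵢ) = π_{S²}((P T_C)⁻¹(p_k))`. -/
def hMeas {n : ℕ} (TC : SE3) (ξ : SE3 × V3 × (Fin n → V3)) : Fin n → V3 :=
  fun k => piS (seAct (seInv (seMul ξ.1 TC)) (ξ.2.2 k))

/-- The output action `ρ((A, w, Qᵢ), (ηᵢ)) = (R_{Qᵢ}ᵀ ηᵢ)`. -/
def rho {n : ℕ} (X : GVI n) (η : Fin n → V3) : Fin n → V3 :=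
  fun i => mv (X.2.2 i).1ᵀ (η i)


open Matrix in
lemma norm_mv (A : Mat3) (q : V3) (h : Aᵀ * A = 1) : ‖mv A q‖ = ‖q‖ := by
  have key : (A.mulVec q) ⬝ᵥ (A.mulVec q) = q ⬝ᵥ q := by
    rw [Matrix.dotProduct_mulVec, Matrix.vecMul_mulVec, h, Matrix.vecMul_one]
  rw [EuclideanSpace.norm_eq, EuclideanSpace.norm_eq]
  congr 1
  simpa [mv, dotProduct, pow_two] using key

lemma orth_mul (A B : Mat3) (hA : Aᵀ * A = 1) (hB : Bᵀ * B = 1) :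
    (A * B)ᵀ * (A * B) = 1 := by
  rw [Matrix.transpose_mul, Matrix.mul_assoc, ← Matrix.mul_assoc Aᵀ, hA, Matrix.one_mul, hB]

lemma seAct_inv_act (S : SE3) (h : S.1ᵀ * S.1 = 1) (x : V3) :
    seAct (seInv S) (seAct S x) = x := by
  simp only [seAct, seInv, mv]
  simp only [WithLp.ofLp_add, WithLp.ofLp_toLp]
  rw [Matrix.mulVec_add, Matrix.mulVec_mulVec, h]
  simp [Matrix.one_mulVec]

/-- (Lemma 2, part 2: output equivariance.)
`π_{S²}(((PA)T_C)⁻¹((P A T_C)(Q_k⁻¹((P T_C)⁻¹(p_k))))) = R_{Q_k}ᵀ π_{S²}((P T_C)⁻¹(p_k))`;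
that is, `h(Φ(X, ξ)) = ρ(X, h(ξ))`. -/
theorem output_equivariance (n : ℕ) (hn : 1 ≤ n) (TC : SE3) (hTC : SO3 TC.1)
    (X : GVI n) (hX : gMem X)
    (P : SE3) (hP : SO3 P.1) (v : V3) (p : Fin n → V3)
    (hp : ∀ k, seAct (seInv (seMul P TC)) (p k) ≠ 0) :
    (∀ k : Fin n,
      piS (seAct (seInv (seMul (seMul P X.1) TC))
          (seAct (seMul (seMul P X.1) TC)
            (sotAct (sotInv (X.2.2 k)) (seAct (seInv (seMul P TC)) (p k)))))
        = mv (X.2.2 k).1ᵀ (piS (seAct (seInv (seMul P TC)) (p k)))) ∧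
    hMeas TC (Phi TC X (P, v, p)) = rho X (hMeas TC (P, v, p)) := by
  have main : ∀ k : Fin n,
      piS (seAct (seInv (seMul (seMul P X.1) TC))
          (seAct (seMul (seMul P X.1) TC)
            (sotAct (sotInv (X.2.2 k)) (seAct (seInv (seMul P TC)) (p k)))))
        = mv (X.2.2 k).1ᵀ (piS (seAct (seInv (seMul P TC)) (p k))) := by
    intro k
    set q := seAct (seInv (seMul P TC)) (p k) with hq
    have hQ := (hX.2 k).1
    have hc := (hX.2 k).2
    have hSO : ((seMul (seMul P X.1) TC).1)ᵀ * (seMul (seMul P X.1) TC).1 = 1 := by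
      simp only [seMul]
      exact orth_mul _ _ (orth_mul _ _ hP.1 hX.1.1) hTC.1
    rw [seAct_inv_act _ hSO]
    have hRT : ((X.2.2 k).1ᵀ)ᵀ * (X.2.2 k).1ᵀ = 1 := by
      rw [Matrix.transpose_transpose, mul_eq_one_comm.mp hQ.1]
    have hnorm : ‖mv (X.2.2 k).1ᵀ q‖ = ‖q‖ := norm_mv _ _ hRT
    simp only [sotAct, sotInv, piS, mv] at *
    simp only [WithLp.ofLp_smul, WithLp.ofLp_toLp] at *
    rw [norm_smul, Matrix.mulVec_smul, WithLp.toLp_smul, smul_smul]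
    congr 1
    have hc' : (0:ℝ) < (X.2.2 k).2⁻¹ := by positivity
    rw [show ‖(X.2.2 k).2⁻¹‖ = (X.2.2 k).2⁻¹ from abs_of_pos hc', hnorm]
    have hq0 : ‖q‖ ≠ 0 := by
      simp only [norm_ne_zero_iff]
      exact hp k
    have hc0 : (X.2.2 k).2 ≠ 0 := ne_of_gt hc
    field_simp
  exact ⟨main, funext fun k => main k⟩
end
end
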